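/- Let W be a nonempty string over Σ, let S be the set consisting of the empty string together with all distinct nonempty substrings of W, and let a : S → ℤ be any function with a(ε) = 0. For u ∈ S, define f(u) = Σ_{v ∈ S, v is a suffix of u} a(v) (the sum over all distinct suffixes of u, including u itself and the empty string). For u ∈ S, say a string c·u (c a single character) is a child of u if c·u ∈ S; u is a leaf if it has no children, and let c(u) denote the number of children of u. Then Σ_{u ∈ S} a(u) = Σ_{u ∈ S, u a leaf} f(u) − Σ_{u ∈ S, u not a leaf} (c(u) − 1)·f(u). -/

import Mathlib

/-- The set `S` of vertices of the trie of substrings of `W`: the empty string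
together with all distinct nonempty substrings of `W` (i.e. all infixes of `W`,
obtained as prefixes of suffixes of `W`). -/
def trieVerts {α : Type*} [DecidableEq α] (W : List α) : Finset (List α) :=
  (W.tails.flatMap List.inits).toFinset

/-- `f(u) = Σ_{v ∈ S, v suffix of u} a(v)`: the sum of `a` over the ancestors of `u`
in the (reversed) trie, i.e. over all distinct suffixes of `u` lying in `S`. -/
def fval {α : Type*} [DecidableEq α] (W : List α) (a : List α → ℤ) (u : List α) : ℤ :=
  ∑ v ∈ (trieVerts W).filter (fun v => v <:+ u), a v

/-- `c(u)`: the number of children of `u`, i.e. the number of one-character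
left-extensions `ch :: u` of `u` lying in `S` (such a character must occur in `W`). -/
def nchild {α : Type*} [DecidableEq α] (W : List α) (u : List α) : ℕ :=
  (W.toFinset.filter (fun ch => ch :: u ∈ trieVerts W)).card

/-- The trie identity: for a nonempty string `W`, `S` the set of the empty string and
all distinct nonempty substrings of `W`, and any `a : S → ℤ` with `a(ε) = 0`,
`Σ_{u ∈ S} a(u) = Σ_{u ∈ S leaf} f(u) − Σ_{u ∈ S not leaf} (c(u) − 1)·f(u)`,
where `u` is a leaf iff it has no children. -/
lemma mem_trieVerts {α : Type*} [DecidableEq α] {W u : List α} :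
    u ∈ trieVerts W ↔ u <:+: W := by
  simp [trieVerts, List.mem_flatMap, List.infix_iff_prefix_suffix]
  tauto

lemma nil_mem_trieVerts {α : Type*} [DecidableEq α] (W : List α) :
    [] ∈ trieVerts W := mem_trieVerts.2 List.nil_infix

lemma suffix_mem_trieVerts {α : Type*} [DecidableEq α] {W u v : List α}
    (h : v <:+ u) (hu : u ∈ trieVerts W) : v ∈ trieVerts W :=
  mem_trieVerts.2 (h.isInfix.trans (mem_trieVerts.1 hu))

lemma fval_nil {α : Type*} [DecidableEq α] (W : List α) (a : List α → ℤ) :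
    fval W a [] = a [] := by
  unfold fval
  have : (trieVerts W).filter (fun v => v <:+ ([] : List α)) = {[]} := by
    ext v
    simp only [Finset.mem_filter, Finset.mem_singleton, List.suffix_nil]
    exact ⟨fun h => h.2, by rintro rfl; exact ⟨nil_mem_trieVerts W, rfl⟩⟩
  rw [this, Finset.sum_singleton]

lemma fval_cons {α : Type*} [DecidableEq α] {W : List α} (a : List α → ℤ)
    {ch : α} {u : List α} (h : ch :: u ∈ trieVerts W) :
    fval W a (ch :: u) = a (ch :: u) + fval W a u := by
  unfold fval
  have hset : (trieVerts W).filter (fun v => v <:+ (ch :: u)) =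
      insert (ch :: u) ((trieVerts W).filter (fun v => v <:+ u)) := by
    ext v
    simp only [Finset.mem_filter, Finset.mem_insert, List.suffix_cons_iff]
    constructor
    · rintro ⟨hv, rfl | hs⟩
      · exact Or.inl rfl
      · exact Or.inr ⟨hv, hs⟩
    · rintro (rfl | ⟨hv, hs⟩)
      · exact ⟨h, Or.inl rfl⟩
      · exact ⟨hv, Or.inr hs⟩
  rw [hset, Finset.sum_insert]
  simp only [Finset.mem_filter, not_and]
  intro _ hs
  exact absurd (List.IsSuffix.length_le hs) (by simp)

theorem trieIdentity {α : Type*} [DecidableEq α] (W : List α) (hW : W ≠ [])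
    (a : List α → ℤ) (ha : a [] = 0) :
    ∑ u ∈ trieVerts W, a u =
      (∑ u ∈ (trieVerts W).filter (fun u => nchild W u = 0), fval W a u) -
        ∑ u ∈ (trieVerts W).filter (fun u => nchild W u ≠ 0),
          ((nchild W u : ℤ) - 1) * fval W a u := by
  classical
  set S := trieVerts W with hS
  set T := S.filter (fun u => u ≠ []) with hT
  have e1 : ∑ u ∈ S.filter (fun u => nchild W u = 0),
      ((1 : ℤ) - (nchild W u : ℤ)) * fval W a u
      = ∑ u ∈ S.filter (fun u => nchild W u = 0), fval W a u :=
    Finset.sum_congr rfl (fun u hu => by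
      have h0 : nchild W u = 0 := (Finset.mem_filter.1 hu).2
      rw [h0]; push_cast; ring)
  have e2 : ∑ u ∈ S.filter (fun u => ¬ nchild W u = 0),
      ((1 : ℤ) - (nchild W u : ℤ)) * fval W a u
      = -∑ u ∈ S.filter (fun u => nchild W u ≠ 0),
          ((nchild W u : ℤ) - 1) * fval W a u := by
    rw [← Finset.sum_neg_distrib]
    exact Finset.sum_congr rfl (fun u _ => by ring)
  have hrhs : (∑ u ∈ S.filter (fun u => nchild W u = 0), fval W a u) -
        ∑ u ∈ S.filter (fun u => nchild W u ≠ 0),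
          ((nchild W u : ℤ) - 1) * fval W a u
      = ∑ u ∈ S, ((1 : ℤ) - (nchild W u : ℤ)) * fval W a u := by
    rw [← Finset.sum_filter_add_sum_filter_not S (fun u => nchild W u = 0)
      (fun u => ((1 : ℤ) - (nchild W u : ℤ)) * fval W a u), e1, e2, ← sub_eq_add_neg]
  rw [hrhs]
  -- step A : Σ_S (f - a) = Σ_T f(tail)
  have stepA : ∑ u ∈ S, (fval W a u - a u) = ∑ w ∈ T, fval W a w.tail := by
    rw [← Finset.sum_filter_add_sum_filter_not S (fun u => u = [])]
    have h1 : S.filter (fun u => u = []) = {[]} := by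
      ext v
      simp only [Finset.mem_filter, Finset.mem_singleton]
      exact ⟨fun h => h.2, by rintro rfl; exact ⟨nil_mem_trieVerts W, rfl⟩⟩
    rw [h1, Finset.sum_singleton, fval_nil, sub_self, zero_add]
    apply Finset.sum_congr rfl
    intro w hw
    obtain ⟨hwS, hwne⟩ := Finset.mem_filter.1 hw
    obtain ⟨ch, u, rfl⟩ := List.exists_cons_of_ne_nil hwne
    rw [fval_cons a hwS]
    simp
  -- step B : Σ_S c(u) f(u) = Σ_T f(tail)
  have stepB : ∑ u ∈ S, (nchild W u : ℤ) * fval W a u = ∑ w ∈ T, fval W a w.tail := by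
    have h2 : ∀ u ∈ S, (nchild W u : ℤ) * fval W a u =
        ∑ ch ∈ W.toFinset.filter (fun ch => ch :: u ∈ S), fval W a u := by
      intro u _
      rw [Finset.sum_const, nchild, nsmul_eq_mul]
    rw [Finset.sum_congr rfl h2, Finset.sum_sigma']
    refine Finset.sum_bij' (fun x _ => x.2 :: x.1)
      (fun w hw => ⟨w.tail, w.head (Finset.mem_filter.1 hw).2⟩) ?_ ?_ ?_ ?_ ?_
    · intro x hx
      rw [Finset.mem_sigma] at hx
      exact Finset.mem_filter.2 ⟨(Finset.mem_filter.1 hx.2).2, by simp⟩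
    · intro w hw
      obtain ⟨hwS, hwne⟩ := Finset.mem_filter.1 hw
      rw [Finset.mem_sigma]
      refine ⟨suffix_mem_trieVerts (List.tail_suffix w) hwS, ?_⟩
      refine Finset.mem_filter.2 ⟨?_, ?_⟩
      · rw [List.mem_toFinset]
        exact (mem_trieVerts.1 hwS).subset (List.head_mem hwne)
      · rw [List.cons_head_tail hwne]
        exact hwS
    · intro x hx; rfl
    · intro w hw
      exact List.cons_head_tail (Finset.mem_filter.1 hw).2
    · intro x hx; rfl
  have hsplit : ∑ u ∈ S, ((1 : ℤ) - (nchild W u : ℤ)) * fval W a u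
      = ∑ u ∈ S, (fval W a u - (nchild W u : ℤ) * fval W a u) :=
    Finset.sum_congr rfl (fun u _ => by ring)
  rw [hsplit, Finset.sum_sub_distrib, stepB, ← stepA, Finset.sum_sub_distrib]
  ring
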